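/- (Theorem 1, monotonicity of MTWDL.) Let τ0 > 0 and for (d,v) ∈ ℝ² write Z = d + τ0·v. Let D ⊂ ℝ² be a bounded Lebesgue-measurable set of positive Lebesgue measure, and let u : ℝ² → ℝ be Lebesgue integrable on D with u(d,v) > 0 for all (d,v) ∈ D. Suppose λ̃ : (0,∞) → ℝ is differentiable and satisfies ∂U/∂λ(λ̃(σ),σ) = 0 for every σ > 0 (i.e. λ̃(σ) is the optimal decision threshold). Then the minimal total wrong decision loss Ũ(σ) = U(λ̃(σ),σ) is a strictly monotonically increasing function of σ; in fact Ũ'(σ) > 0 for all σ > 0. -/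

import Mathlib

open MeasureTheory Real Filter

/-- The Gaussian Q-function `Q(x) = (1/√(2π)) ∫_x^∞ exp(−t²/2) dt`. -/
noncomputable def Qfun (x : ℝ) : ℝ :=
  (Real.sqrt (2 * Real.pi))⁻¹ * ∫ t in Set.Ioi x, Real.exp (-t ^ 2 / 2)

/-- The wrong-decision probability `P_w(d,v;λ,σ)`. -/
noncomputable def Pw (τ0 σ lam : ℝ) (p : ℝ × ℝ) : ℝ :=
  if 0 ≤ p.1 + τ0 * p.2 then Qfun ((p.1 + τ0 * p.2 - lam) / σ)
  else Qfun (-(p.1 + τ0 * p.2 - lam) / σ)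

/-- The total wrong decision loss `U(λ,σ) = ∬_D u(d,v) P_w(d,v;λ,σ) dd dv`. -/
noncomputable def Uloss (τ0 : ℝ) (D : Set (ℝ × ℝ)) (u : ℝ × ℝ → ℝ) (lam σ : ℝ) : ℝ :=
  ∫ p in D, u p * Pw τ0 σ lam p




noncomputable def phiR (x : ℝ) : ℝ := (Real.sqrt (2 * Real.pi))⁻¹ * Real.exp (-x ^ 2 / 2)

lemma c0_pos : 0 < (Real.sqrt (2 * Real.pi))⁻¹ :=
  inv_pos.2 (Real.sqrt_pos.2 (by positivity))

lemma phiR_pos (x : ℝ) : 0 < phiR x := mul_pos c0_pos (Real.exp_pos _)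

lemma phiR_le (x : ℝ) : phiR x ≤ (Real.sqrt (2 * Real.pi))⁻¹ := by
  have : Real.exp (-x ^ 2 / 2) ≤ 1 := Real.exp_le_one_iff.2 (by nlinarith [sq_nonneg x])
  calc phiR x ≤ (Real.sqrt (2 * Real.pi))⁻¹ * 1 :=
        mul_le_mul_of_nonneg_left this c0_pos.le
    _ = _ := mul_one _

lemma phiR_cont : Continuous phiR := by unfold phiR; continuity

lemma gcont : Continuous fun t : ℝ => Real.exp (-t ^ 2 / 2) := by continuity

lemma gint : Integrable (fun t : ℝ => Real.exp (-t ^ 2 / 2)) := by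
  have h := integrable_exp_neg_mul_sq (b := ((2:ℝ)⁻¹)) (by norm_num)
  refine h.congr (ae_of_all _ fun t => ?_)
  ring_nf

lemma gnonneg (t : ℝ) : 0 ≤ Real.exp (-t ^ 2 / 2) := (Real.exp_pos _).le

lemma Qfun_eq (x : ℝ) : Qfun x = (Real.sqrt (2 * Real.pi))⁻¹ *
    ((∫ t in Set.Ioi (0:ℝ), Real.exp (-t ^ 2 / 2)) - ∫ t in (0:ℝ)..x, Real.exp (-t ^ 2 / 2)) := by
  have key : (∫ t in Set.Ioi x, Real.exp (-t ^ 2 / 2)) =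
      (∫ t in Set.Ioi (0:ℝ), Real.exp (-t ^ 2 / 2)) - ∫ t in (0:ℝ)..x, Real.exp (-t ^ 2 / 2) := by
    rcases le_or_gt 0 x with h | h
    · rw [intervalIntegral.integral_of_le h, ← Set.Ioc_union_Ioi_eq_Ioi h,
        setIntegral_union (Set.Ioc_disjoint_Ioi le_rfl) measurableSet_Ioi
          (gint.integrableOn) (gint.integrableOn)]
      ring
    · rw [intervalIntegral.integral_of_ge h.le, ← Set.Ioc_union_Ioi_eq_Ioi h.le,
        setIntegral_union (Set.Ioc_disjoint_Ioi le_rfl) measurableSet_Ioi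
          (gint.integrableOn) (gint.integrableOn)]
      ring
  rw [Qfun, key]

lemma Qfun_hasDerivAt (x : ℝ) : HasDerivAt Qfun (-(phiR x)) x := by
  have h1 : HasDerivAt (fun y => ∫ t in (0:ℝ)..y, Real.exp (-t ^ 2 / 2))
      (Real.exp (-x ^ 2 / 2)) x :=
    intervalIntegral.integral_hasDerivAt_right gint.intervalIntegrable
      gcont.stronglyMeasurable.stronglyMeasurableAtFilter gcont.continuousAt
  have h2 := ((hasDerivAt_const x (∫ t in Set.Ioi (0:ℝ), Real.exp (-t ^ 2 / 2))).sub h1).const_mul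
      ((Real.sqrt (2 * Real.pi))⁻¹)
  have h3 : HasDerivAt (fun y => (Real.sqrt (2 * Real.pi))⁻¹ *
      ((∫ t in Set.Ioi (0:ℝ), Real.exp (-t ^ 2 / 2)) - ∫ t in (0:ℝ)..y, Real.exp (-t ^ 2 / 2)))
      (-(phiR x)) x := by
    refine h2.congr_deriv ?_
    simp [phiR]
  exact h3.congr_of_eventuallyEq (Filter.Eventually.of_forall fun y => (Qfun_eq y))

lemma Qfun_cont : Continuous Qfun :=
  continuous_iff_continuousAt.2 fun x => (Qfun_hasDerivAt x).differentiableAt.continuousAt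

lemma Qfun_nonneg (x : ℝ) : 0 ≤ Qfun x :=
  mul_nonneg c0_pos.le (setIntegral_nonneg measurableSet_Ioi fun t _ => gnonneg t)

lemma Qfun_le (x : ℝ) :
    Qfun x ≤ (Real.sqrt (2 * Real.pi))⁻¹ * ∫ t, Real.exp (-t ^ 2 / 2) := by
  refine mul_le_mul_of_nonneg_left ?_ c0_pos.le
  exact setIntegral_le_integral gint (ae_of_all _ fun t => gnonneg t)

noncomputable def sgn0 (x : ℝ) : ℝ := if 0 ≤ x then 1 else -1

lemma sgn0_mul_abs (x : ℝ) : sgn0 x * x = |x| := by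
  unfold sgn0; split_ifs with h
  · rw [one_mul, abs_of_nonneg h]
  · rw [neg_one_mul, abs_of_neg (not_le.1 h)]

lemma sgn0_abs (x : ℝ) : |sgn0 x| = 1 := by
  unfold sgn0; split_ifs <;> simp

lemma line_null (τ0 : ℝ) : volume {p : ℝ × ℝ | p.1 + τ0 * p.2 = 0} = 0 := by
  set L : (ℝ × ℝ) →ₗ[ℝ] ℝ :=
    (LinearMap.fst ℝ ℝ ℝ) + τ0 • (LinearMap.snd ℝ ℝ ℝ) with hL
  have hset : {p : ℝ × ℝ | p.1 + τ0 * p.2 = 0} = (LinearMap.ker L : Set (ℝ × ℝ)) := by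
    ext p; simp [hL, LinearMap.mem_ker, mul_comm]
  rw [hset]
  refine Measure.addHaar_submodule _ _ ?_
  intro h
  have h1 : ((1:ℝ), (0:ℝ)) ∈ LinearMap.ker L := h ▸ Submodule.mem_top
  simp [hL] at h1

/-- `Z = d + τ0 v`. -/
def Zv (τ0 : ℝ) (p : ℝ × ℝ) : ℝ := p.1 + τ0 * p.2

noncomputable def sg (τ0 : ℝ) (p : ℝ × ℝ) : ℝ := sgn0 (Zv τ0 p)

noncomputable def xv (τ0 : ℝ) (q p : ℝ × ℝ) : ℝ := sg τ0 p * (Zv τ0 p - q.1) / q.2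

noncomputable def Fm (τ0 : ℝ) (u : ℝ × ℝ → ℝ) (q p : ℝ × ℝ) : ℝ := u p * Pw τ0 q.2 q.1 p

noncomputable def Fm' (τ0 : ℝ) (u : ℝ × ℝ → ℝ) (q p : ℝ × ℝ) : (ℝ × ℝ) →L[ℝ] ℝ :=
  (u p * phiR (xv τ0 q p) * sg τ0 p / q.2) • (ContinuousLinearMap.fst ℝ ℝ ℝ)
  + (u p * phiR (xv τ0 q p) * sg τ0 p * (Zv τ0 p - q.1) / q.2 ^ 2) • (ContinuousLinearMap.snd ℝ ℝ ℝ)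

lemma Fm'_apply (τ0 : ℝ) (u : ℝ × ℝ → ℝ) (q p : ℝ × ℝ) (h : ℝ × ℝ) :
    Fm' τ0 u q p h = u p * phiR (xv τ0 q p) * sg τ0 p / q.2 * h.1
      + u p * phiR (xv τ0 q p) * sg τ0 p * (Zv τ0 p - q.1) / q.2 ^ 2 * h.2 := by
  simp [Fm', smul_eq_mul]

lemma Pw_eq (τ0 σ lam : ℝ) (p : ℝ × ℝ) :
    Pw τ0 σ lam p = Qfun (sg τ0 p * (Zv τ0 p - lam) / σ) := by
  unfold Pw sg sgn0 Zv
  split_ifs with h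
  · rw [one_mul]
  · rw [neg_one_mul]

lemma Fm_eq (τ0 : ℝ) (u : ℝ × ℝ → ℝ) (q p : ℝ × ℝ) :
    Fm τ0 u q p = u p * Qfun (xv τ0 q p) := by
  rw [Fm, Pw_eq]; rfl

lemma Fm_hasFDerivAt (τ0 : ℝ) (u : ℝ × ℝ → ℝ) (p : ℝ × ℝ) (q : ℝ × ℝ) (hq2 : q.2 ≠ 0) :
    HasFDerivAt (fun q' => Fm τ0 u q' p) (Fm' τ0 u q p) q := by
  have hnum : HasFDerivAt (fun q' : ℝ × ℝ => sg τ0 p * (Zv τ0 p - q'.1))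
      ((sg τ0 p) • (-(ContinuousLinearMap.fst ℝ ℝ ℝ))) q :=
    (hasFDerivAt_fst.const_sub (Zv τ0 p)).const_mul (sg τ0 p)
  have hinv : HasFDerivAt (fun q' : ℝ × ℝ => (q'.2)⁻¹)
      ((-(q.2 ^ 2)⁻¹) • (ContinuousLinearMap.snd ℝ ℝ ℝ)) q :=
    (hasDerivAt_inv hq2).comp_hasFDerivAt q hasFDerivAt_snd
  have hx : HasFDerivAt (fun q' => xv τ0 q' p)
      ((sg τ0 p * (Zv τ0 p - q.1)) • ((-(q.2 ^ 2)⁻¹) • ContinuousLinearMap.snd ℝ ℝ ℝ)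
        + (q.2)⁻¹ • ((sg τ0 p) • (-(ContinuousLinearMap.fst ℝ ℝ ℝ)))) q := by
    simp only [xv, div_eq_mul_inv]
    exact hnum.mul hinv
  have hQ := (Qfun_hasDerivAt (xv τ0 q p)).comp_hasFDerivAt q hx
  have hfin := hQ.const_mul (u p)
  have hfun : (fun q' => Fm τ0 u q' p) = fun q' => u p * Qfun (xv τ0 q' p) :=
    funext fun q' => Fm_eq τ0 u q' p
  rw [hfun]
  refine hfin.congr_fderiv ?_
  refine ContinuousLinearMap.ext fun h => ?_
  rw [Fm'_apply]
  simp only [Function.comp, ContinuousLinearMap.smul_apply, ContinuousLinearMap.add_apply,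
    ContinuousLinearMap.neg_apply, ContinuousLinearMap.coe_fst', ContinuousLinearMap.coe_snd',
    smul_eq_mul]
  field_simp
  ring

lemma sgn0_abs_sg (τ0 : ℝ) (p : ℝ × ℝ) : |sg τ0 p| = 1 := sgn0_abs _

set_option maxHeartbeats 2000000 in
lemma key (τ0 : ℝ) (hτ0 : 0 < τ0) (D : Set (ℝ × ℝ)) (hDmeas : MeasurableSet D)
    (hDbdd : Bornology.IsBounded D) (hDpos : 0 < volume D) (u : ℝ × ℝ → ℝ)
    (hu_int : IntegrableOn u D volume)
    (hu_pos : ∀ p ∈ D, 0 < u p)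
    (lamt : ℝ → ℝ)
    (hlamt_diff : ∀ σ : ℝ, 0 < σ → DifferentiableAt ℝ lamt σ)
    (hlamt_opt : ∀ σ : ℝ, 0 < σ → deriv (fun l => Uloss τ0 D u l σ) (lamt σ) = 0)
    (σ0 : ℝ) (hσ0 : 0 < σ0) :
    ∃ dv : ℝ, 0 < dv ∧ HasDerivAt (fun s => Uloss τ0 D u (lamt s) s) dv σ0 := by
  obtain ⟨R0, hR0⟩ := isBounded_iff_forall_norm_le.1 hDbdd
  set R : ℝ := max R0 0 with hRdef
  have hR : ∀ p ∈ D, ‖p‖ ≤ R := fun p hp => le_trans (hR0 p hp) (le_max_left _ _)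
  have hRnn : 0 ≤ R := le_max_right _ _
  set c0 : ℝ := (Real.sqrt (2 * Real.pi))⁻¹ with hc0def
  set l0 : ℝ := lamt σ0 with hl0def
  set q0 : ℝ × ℝ := (l0, σ0) with hq0def
  set ε : ℝ := σ0 / 2 with hεdef
  have hεpos : 0 < ε := by positivity
  set RZ : ℝ := R * (1 + τ0) with hRZdef
  have hZb : ∀ p ∈ D, |Zv τ0 p| ≤ RZ := by
    intro p hp
    have h1 : |p.1| ≤ ‖p‖ := by rw [← Real.norm_eq_abs]; exact norm_fst_le p
    have h2 : |p.2| ≤ ‖p‖ := by rw [← Real.norm_eq_abs]; exact norm_snd_le p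
    have h3 := hR p hp
    calc |Zv τ0 p| ≤ |p.1| + |τ0 * p.2| := abs_add_le _ _
      _ = |p.1| + τ0 * |p.2| := by rw [abs_mul, abs_of_pos hτ0]
      _ ≤ R + τ0 * R := by
          have := mul_le_mul_of_nonneg_left (h2.trans h3) hτ0.le
          nlinarith
      _ = RZ := by ring
  have hZmeas : Measurable (Zv τ0) := by
    unfold Zv; exact measurable_fst.add (measurable_snd.const_mul τ0)
  have hsmeas : Measurable (sg τ0) := by
    unfold sg sgn0
    exact Measurable.ite (measurableSet_le measurable_const hZmeas) measurable_const
      measurable_const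
  -- measurability of p ↦ xv τ0 q p for any q
  have hxvmeas : ∀ q : ℝ × ℝ, Measurable fun p => xv τ0 q p := by
    intro q
    unfold xv
    exact ((hsmeas.mul (hZmeas.sub measurable_const)).div measurable_const)
  -- ball facts
  have hball : ∀ q ∈ Metric.ball q0 ε, σ0 / 2 < q.2 ∧ |q.1| ≤ |l0| + ε ∧ q.2 ≠ 0 := by
    intro q hq
    rw [Metric.mem_ball, Prod.dist_eq, max_lt_iff, Real.dist_eq, Real.dist_eq] at hq
    obtain ⟨hq1, hq2⟩ := hq
    have h2 : σ0 / 2 < q.2 := by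
      have := abs_lt.1 hq2
      simp only [hεdef] at this ⊢
      linarith [this.1]
    refine ⟨h2, ?_, by linarith [h2, hεpos]⟩
    have := abs_lt.1 hq1
    have : |q.1| ≤ |l0| + ε := by
      rw [abs_le]; constructor
      · have := neg_abs_le l0; linarith [ (abs_lt.1 hq1).1 ]
      · have := le_abs_self l0; linarith [ (abs_lt.1 hq1).2 ]
    exact this
  -- norm bound for Fm'
  set Cb : ℝ := c0 * (2 / σ0) + c0 * (RZ + (|l0| + ε)) * (2 / σ0) ^ 2 with hCbdef
  have hFnorm : ∀ p ∈ D, ∀ q ∈ Metric.ball q0 ε, ‖Fm' τ0 u q p‖ ≤ |u p| * Cb := by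
    intro p hp q hq
    obtain ⟨hq2half, hq1abs, hq2ne⟩ := hball q hq
    have hq2pos : 0 < q.2 := lt_trans (by positivity) hq2half
    set A : ℝ := u p * phiR (xv τ0 q p) * sg τ0 p / q.2 with hAdef
    set B : ℝ := u p * phiR (xv τ0 q p) * sg τ0 p * (Zv τ0 p - q.1) / q.2 ^ 2 with hBdef
    have hop : ‖Fm' τ0 u q p‖ ≤ |A| + |B| := by
      refine ContinuousLinearMap.opNorm_le_bound _ (by positivity) fun h => ?_
      rw [Fm'_apply]
      have h1 : |h.1| ≤ ‖h‖ := by rw [← Real.norm_eq_abs]; exact norm_fst_le h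
      have h2 : |h.2| ≤ ‖h‖ := by rw [← Real.norm_eq_abs]; exact norm_snd_le h
      calc ‖A * h.1 + B * h.2‖ ≤ |A * h.1| + |B * h.2| := abs_add_le _ _
        _ = |A| * |h.1| + |B| * |h.2| := by rw [abs_mul, abs_mul]
        _ ≤ |A| * ‖h‖ + |B| * ‖h‖ :=
            add_le_add (mul_le_mul_of_nonneg_left h1 (abs_nonneg A))
              (mul_le_mul_of_nonneg_left h2 (abs_nonneg B))
        _ = (|A| + |B|) * ‖h‖ := by ring
    have hinvle : q.2⁻¹ ≤ 2 / σ0 := by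
      rw [div_eq_mul_inv]
      have : (σ0 / 2)⁻¹ = 2 * σ0⁻¹ := by field_simp
      rw [← this]
      exact inv_anti₀ (by positivity) hq2half.le
    have hAb : |A| ≤ |u p| * (c0 * (2 / σ0)) := by
      have : |A| = |u p| * phiR (xv τ0 q p) * q.2⁻¹ := by
        rw [hAdef, abs_div, abs_mul, abs_mul, sgn0_abs_sg, abs_of_pos (phiR_pos _),
          abs_of_pos hq2pos, mul_one, div_eq_mul_inv]
      rw [this]
      have h1 : phiR (xv τ0 q p) * q.2⁻¹ ≤ c0 * (2 / σ0) :=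
        mul_le_mul (phiR_le _) hinvle (inv_nonneg.2 hq2pos.le) c0_pos.le
      calc |u p| * phiR (xv τ0 q p) * q.2⁻¹ = |u p| * (phiR (xv τ0 q p) * q.2⁻¹) := by ring
        _ ≤ |u p| * (c0 * (2 / σ0)) := mul_le_mul_of_nonneg_left h1 (abs_nonneg _)
    have hBb : |B| ≤ |u p| * (c0 * (RZ + (|l0| + ε)) * (2 / σ0) ^ 2) := by
      have hBeq : |B| = |u p| * phiR (xv τ0 q p) * |Zv τ0 p - q.1| * (q.2 ^ 2)⁻¹ := by
        rw [hBdef, abs_div, abs_mul, abs_mul, abs_mul, sgn0_abs_sg, abs_of_pos (phiR_pos _),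
          mul_one, abs_of_pos (pow_pos hq2pos 2), div_eq_mul_inv]
      rw [hBeq]
      have hZq : |Zv τ0 p - q.1| ≤ RZ + (|l0| + ε) := by
        calc |Zv τ0 p - q.1| ≤ |Zv τ0 p| + |q.1| := abs_sub _ _
          _ ≤ RZ + (|l0| + ε) := add_le_add (hZb p hp) hq1abs
      have hinv2 : (q.2 ^ 2)⁻¹ ≤ (2 / σ0) ^ 2 := by
        rw [← inv_pow]
        exact pow_le_pow_left₀ (inv_nonneg.2 hq2pos.le) hinvle 2
      have hmain : phiR (xv τ0 q p) * |Zv τ0 p - q.1| * (q.2 ^ 2)⁻¹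
          ≤ c0 * (RZ + (|l0| + ε)) * (2 / σ0) ^ 2 := by
        have hstep : phiR (xv τ0 q p) * |Zv τ0 p - q.1| ≤ c0 * (RZ + (|l0| + ε)) :=
          mul_le_mul (phiR_le _) hZq (abs_nonneg _) c0_pos.le
        exact mul_le_mul hstep hinv2 (inv_nonneg.2 (pow_nonneg hq2pos.le 2))
          (by positivity)
      calc |u p| * phiR (xv τ0 q p) * |Zv τ0 p - q.1| * (q.2 ^ 2)⁻¹
          = |u p| * (phiR (xv τ0 q p) * |Zv τ0 p - q.1| * (q.2 ^ 2)⁻¹) := by ring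
        _ ≤ |u p| * (c0 * (RZ + (|l0| + ε)) * (2 / σ0) ^ 2) :=
            mul_le_mul_of_nonneg_left hmain (abs_nonneg _)
    calc ‖Fm' τ0 u q p‖ ≤ |A| + |B| := hop
      _ ≤ |u p| * (c0 * (2 / σ0)) + |u p| * (c0 * (RZ + (|l0| + ε)) * (2 / σ0) ^ 2) :=
          add_le_add hAb hBb
      _ = |u p| * Cb := by rw [hCbdef]; ring
  -- measurability
  have hPwmeas : ∀ q : ℝ × ℝ, Measurable fun p => Pw τ0 q.2 q.1 p := by
    intro q
    have : (fun p => Pw τ0 q.2 q.1 p) = fun p => Qfun (sg τ0 p * (Zv τ0 p - q.1) / q.2) :=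
      funext fun p => Pw_eq τ0 q.2 q.1 p
    rw [this]
    exact Qfun_cont.measurable.comp (hxvmeas q)
  have hFmeas : ∀ q : ℝ × ℝ, AEStronglyMeasurable (fun p => Fm τ0 u q p) (volume.restrict D) :=
    fun q => hu_int.aestronglyMeasurable.mul (hPwmeas q).aestronglyMeasurable
  have hF'meas : AEStronglyMeasurable (fun p => Fm' τ0 u q0 p) (volume.restrict D) := by
    have hwA : Measurable fun p => phiR (xv τ0 q0 p) * sg τ0 p / q0.2 :=
      ((phiR_cont.measurable.comp (hxvmeas q0)).mul hsmeas).div_const _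
    have hwB : Measurable fun p => phiR (xv τ0 q0 p) * sg τ0 p * (Zv τ0 p - q0.1) / q0.2 ^ 2 :=
      (((phiR_cont.measurable.comp (hxvmeas q0)).mul hsmeas).mul
        (hZmeas.sub measurable_const)).div_const _
    have hA : AEStronglyMeasurable
        (fun p => u p * phiR (xv τ0 q0 p) * sg τ0 p / q0.2) (volume.restrict D) :=
      (hu_int.aestronglyMeasurable.mul hwA.aestronglyMeasurable).congr
        (ae_of_all _ fun p => by simp only [Pi.mul_apply]; ring)
    have hB : AEStronglyMeasurable
        (fun p => u p * phiR (xv τ0 q0 p) * sg τ0 p * (Zv τ0 p - q0.1) / q0.2 ^ 2)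
        (volume.restrict D) :=
      (hu_int.aestronglyMeasurable.mul hwB.aestronglyMeasurable).congr
        (ae_of_all _ fun p => by simp only [Pi.mul_apply]; ring)
    exact (hA.smul_const _).add (hB.smul_const _)
  -- integrability of the base function
  have hQbdd : ∀ y : ℝ, ‖Qfun y‖ ≤ c0 * ∫ t, Real.exp (-t ^ 2 / 2) := fun y => by
    rw [Real.norm_eq_abs, abs_of_nonneg (Qfun_nonneg y)]; exact Qfun_le y
  have hFint : Integrable (fun p => Fm τ0 u q0 p) (volume.restrict D) := by
    have h := hu_int.bdd_mul (hPwmeas q0).aestronglyMeasurable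
      (c := c0 * ∫ t, Real.exp (-t ^ 2 / 2)) (ae_of_all _ fun p => by rw [Pw_eq]; exact hQbdd _)
    exact h.congr (ae_of_all _ fun p => by simp only [Fm_eq, Pw_eq, xv]; ring)
  -- the dominated differentiation theorem
  have hbound_int : Integrable (fun p => |u p| * Cb) (volume.restrict D) := by
    simpa [Real.norm_eq_abs] using hu_int.norm.mul_const Cb
  have hU : HasFDerivAt (fun q : ℝ × ℝ => ∫ p in D, Fm τ0 u q p)
      (∫ p in D, Fm' τ0 u q0 p) q0 := by
    refine hasFDerivAt_integral_of_dominated_of_fderiv_le (Metric.ball_mem_nhds q0 hεpos)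
      (Filter.Eventually.of_forall fun q => hFmeas q) hFint hF'meas ?_ hbound_int ?_
    · filter_upwards [ae_restrict_mem hDmeas] with p hp
      intro q hq
      exact hFnorm p hp q hq
    · refine ae_of_all _ fun p q hq => ?_
      exact Fm_hasFDerivAt τ0 u p q (hball q hq).2.2
  -- integrability of the derivative integrand
  have hF'int : Integrable (fun p => Fm' τ0 u q0 p) (volume.restrict D) := by
    refine Integrable.mono' hbound_int hF'meas ?_
    filter_upwards [ae_restrict_mem hDmeas] with p hp
    exact hFnorm p hp q0 (Metric.mem_ball_self hεpos)
  -- generic integrability helper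
  have hIb : ∀ (w : ℝ × ℝ → ℝ) (C : ℝ), AEStronglyMeasurable w (volume.restrict D) →
      (∀ p ∈ D, |w p| ≤ C) → Integrable (fun p => u p * w p) (volume.restrict D) := by
    intro w C hw hC
    refine Integrable.mono' (hu_int.norm.mul_const C) (hu_int.aestronglyMeasurable.mul hw) ?_
    filter_upwards [ae_restrict_mem hDmeas] with p hp
    rw [norm_mul]
    exact mul_le_mul_of_nonneg_left (by rw [Real.norm_eq_abs]; exact hC p hp) (norm_nonneg _)
  have hw1meas : AEStronglyMeasurable (fun p => phiR (xv τ0 q0 p) * sg τ0 p / σ0)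
      (volume.restrict D) :=
    (((phiR_cont.measurable.comp (hxvmeas q0)).mul hsmeas).div_const _).aestronglyMeasurable
  have hw2meas : AEStronglyMeasurable
      (fun p => phiR (xv τ0 q0 p) * (sg τ0 p * Zv τ0 p) / σ0 ^ 2) (volume.restrict D) :=
    (((phiR_cont.measurable.comp (hxvmeas q0)).mul (hsmeas.mul hZmeas)).div_const
      _).aestronglyMeasurable
  have hw1b : ∀ p ∈ D, |phiR (xv τ0 q0 p) * sg τ0 p / σ0| ≤ c0 / σ0 := by
    intro p hp
    rw [abs_div, abs_mul, sgn0_abs_sg, mul_one, abs_of_pos (phiR_pos _), abs_of_pos hσ0]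
    gcongr
    exact phiR_le _
  have hw2b : ∀ p ∈ D, |phiR (xv τ0 q0 p) * (sg τ0 p * Zv τ0 p) / σ0 ^ 2|
      ≤ c0 * RZ / σ0 ^ 2 := by
    intro p hp
    rw [abs_div, abs_of_pos (pow_pos hσ0 2), abs_mul, abs_of_pos (phiR_pos _), abs_mul,
      sgn0_abs_sg, one_mul]
    gcongr <;> first
      | exact phiR_le _
      | exact hZb p hp
      | exact (abs_nonneg _).trans (hZb p hp)
      | positivity
  have hint1 : Integrable (fun p => u p * (phiR (xv τ0 q0 p) * sg τ0 p / σ0))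
      (volume.restrict D) := hIb _ _ hw1meas hw1b
  have hint2 : Integrable (fun p => u p * (phiR (xv τ0 q0 p) * (sg τ0 p * Zv τ0 p) / σ0 ^ 2))
      (volume.restrict D) := hIb _ _ hw2meas hw2b
  -- evaluation of the Fréchet derivative in the λ-direction
  have hL10 : (∫ p in D, Fm' τ0 u q0 p) (1, 0)
      = ∫ p in D, u p * (phiR (xv τ0 q0 p) * sg τ0 p / σ0) := by
    rw [ContinuousLinearMap.integral_apply hF'int]
    refine integral_congr_ae (ae_of_all _ fun p => ?_)
    show Fm' τ0 u q0 p (1, 0) = _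
    rw [Fm'_apply]
    show u p * phiR (xv τ0 q0 p) * sg τ0 p / σ0 * 1
        + u p * phiR (xv τ0 q0 p) * sg τ0 p * (Zv τ0 p - l0) / σ0 ^ 2 * 0
        = u p * (phiR (xv τ0 q0 p) * sg τ0 p / σ0)
    ring
  -- optimality of lamt σ0
  have hd1 : HasDerivAt (fun l => Uloss τ0 D u l σ0) ((∫ p in D, Fm' τ0 u q0 p) (1, 0)) l0 := by
    have hpair : HasDerivAt (fun l : ℝ => (l, σ0)) ((1:ℝ), (0:ℝ)) l0 :=
      (hasDerivAt_id l0).prodMk (hasDerivAt_const l0 σ0)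
    have hcomp := hU.comp_hasDerivAt l0 hpair
    have hfun : ((fun q : ℝ × ℝ => ∫ p in D, Fm τ0 u q p) ∘ fun l : ℝ => (l, σ0))
        = fun l => Uloss τ0 D u l σ0 := by
      funext l
      simp only [Function.comp_apply, Uloss, Fm]
    rwa [hfun] at hcomp
  have hzero : (∫ p in D, Fm' τ0 u q0 p) (1, 0) = 0 := by
    rw [← hd1.deriv]; exact hlamt_opt σ0 hσ0
  have hg0 : (∫ p in D, u p * (phiR (xv τ0 q0 p) * sg τ0 p / σ0)) = 0 := by
    rw [← hL10]; exact hzero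
  -- derivative of the composed map
  have hpair2 : HasDerivAt (fun σ => (lamt σ, σ)) (deriv lamt σ0, 1) σ0 :=
    ((hlamt_diff σ0 hσ0).hasDerivAt).prodMk (hasDerivAt_id σ0)
  have hd2 : HasDerivAt (fun σ => Uloss τ0 D u (lamt σ) σ)
      ((∫ p in D, Fm' τ0 u q0 p) (deriv lamt σ0, 1)) σ0 := by
    have hcomp := hU.comp_hasDerivAt_of_eq σ0 hpair2 rfl
    have hfun : ((fun q : ℝ × ℝ => ∫ p in D, Fm τ0 u q p) ∘ fun σ : ℝ => (lamt σ, σ))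
        = fun σ => Uloss τ0 D u (lamt σ) σ := by
      funext σ
      simp only [Function.comp_apply, Uloss, Fm]
    rwa [hfun] at hcomp
  have hsplit : ((deriv lamt σ0 : ℝ), (1:ℝ))
      = deriv lamt σ0 • ((1:ℝ), (0:ℝ)) + ((0:ℝ), (1:ℝ)) := by
    simp [Prod.ext_iff]
  have hval : (∫ p in D, Fm' τ0 u q0 p) (deriv lamt σ0, 1)
      = (∫ p in D, Fm' τ0 u q0 p) (0, 1) := by
    rw [hsplit, map_add, ContinuousLinearMap.map_smul, hzero, smul_zero, zero_add]
  have hL01 : (∫ p in D, Fm' τ0 u q0 p) (0, 1)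
      = ∫ p in D, u p * (phiR (xv τ0 q0 p) * (sg τ0 p * Zv τ0 p) / σ0 ^ 2) := by
    rw [ContinuousLinearMap.integral_apply hF'int]
    have heq : ∀ p : ℝ × ℝ, Fm' τ0 u q0 p (0, 1)
        = u p * (phiR (xv τ0 q0 p) * (sg τ0 p * Zv τ0 p) / σ0 ^ 2)
          - (l0 / σ0) * (u p * (phiR (xv τ0 q0 p) * sg τ0 p / σ0)) := by
      intro p
      rw [Fm'_apply]
      show u p * phiR (xv τ0 q0 p) * sg τ0 p / σ0 * 0
          + u p * phiR (xv τ0 q0 p) * sg τ0 p * (Zv τ0 p - l0) / σ0 ^ 2 * 1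
          = u p * (phiR (xv τ0 q0 p) * (sg τ0 p * Zv τ0 p) / σ0 ^ 2)
            - l0 / σ0 * (u p * (phiR (xv τ0 q0 p) * sg τ0 p / σ0))
      field_simp
      ring
    rw [integral_congr_ae (ae_of_all _ heq),
      integral_sub hint2 (hint1.const_mul (l0 / σ0)), integral_const_mul, hg0, mul_zero,
      sub_zero]
  -- positivity
  have hpos : 0 < ∫ p in D, u p * (phiR (xv τ0 q0 p) * (sg τ0 p * Zv τ0 p) / σ0 ^ 2) := by
    set f : ℝ × ℝ → ℝ := fun p => u p * (phiR (xv τ0 q0 p) * (sg τ0 p * Zv τ0 p) / σ0 ^ 2)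
      with hfdef
    have hnn : 0 ≤ᵐ[volume.restrict D] f := by
      filter_upwards [ae_restrict_mem hDmeas] with p hp
      have h1 : 0 ≤ sg τ0 p * Zv τ0 p := by rw [sg, sgn0_mul_abs]; exact abs_nonneg _
      exact mul_nonneg (hu_pos p hp).le
        (div_nonneg (mul_nonneg (phiR_pos _).le h1) (pow_nonneg hσ0.le 2))
    have hsupp : D \ {p : ℝ × ℝ | p.1 + τ0 * p.2 = 0} ⊆ Function.support f ∩ D := by
      rintro p ⟨hpD, hpZ⟩
      refine ⟨?_, hpD⟩
      have hZne : Zv τ0 p ≠ 0 := hpZ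
      have h1 : 0 < sg τ0 p * Zv τ0 p := by rw [sg, sgn0_mul_abs]; exact abs_pos.2 hZne
      exact ne_of_gt (mul_pos (hu_pos p hpD)
        (div_pos (mul_pos (phiR_pos _) h1) (pow_pos hσ0 2)))
    have hμ : 0 < volume (Function.support f ∩ D) := by
      calc (0 : ENNReal) < volume D := hDpos
        _ = volume (D \ {p : ℝ × ℝ | p.1 + τ0 * p.2 = 0}) :=
            (measure_diff_null (line_null τ0)).symm
        _ ≤ volume (Function.support f ∩ D) := measure_mono hsupp
    exact (setIntegral_pos_iff_support_of_nonneg_ae hnn hint2).2 hμ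
  refine ⟨_, ?_, hd2⟩
  rw [hval, hL01]
  exact hpos

theorem stmt5 (τ0 : ℝ) (hτ0 : 0 < τ0) (D : Set (ℝ × ℝ)) (hDmeas : MeasurableSet D)
    (hDbdd : Bornology.IsBounded D) (hDpos : 0 < volume D) (u : ℝ × ℝ → ℝ)
    (hu_int : IntegrableOn u D volume)
    (hu_pos : ∀ p ∈ D, 0 < u p)
    (lamt : ℝ → ℝ)
    (hlamt_diff : ∀ σ : ℝ, 0 < σ → DifferentiableAt ℝ lamt σ)
    (hlamt_opt : ∀ σ : ℝ, 0 < σ → deriv (fun l => Uloss τ0 D u l σ) (lamt σ) = 0) :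
    StrictMonoOn (fun σ => Uloss τ0 D u (lamt σ) σ) (Set.Ioi (0 : ℝ)) ∧
    ∀ σ : ℝ, 0 < σ → 0 < deriv (fun s => Uloss τ0 D u (lamt s) s) σ := by
  have key' := key τ0 hτ0 D hDmeas hDbdd hDpos u hu_int hu_pos lamt hlamt_diff hlamt_opt
  have hdpos : ∀ σ : ℝ, 0 < σ → 0 < deriv (fun s => Uloss τ0 D u (lamt s) s) σ := by
    intro σ hσ
    obtain ⟨dv, hdv, hd⟩ := key' σ hσ
    rw [hd.deriv]; exact hdv
  refine ⟨?_, hdpos⟩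
  refine strictMonoOn_of_deriv_pos (convex_Ioi 0) ?_ ?_
  · intro x hx
    obtain ⟨dv, _, hd⟩ := key' x hx
    exact hd.differentiableAt.continuousAt.continuousWithinAt
  · intro x hx
    rw [interior_Ioi] at hx
    exact hdpos x hx
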